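/- Let m, k, ℓ be positive integers with ℓ ≤ k² and suppose that, as real numbers, (k² choose ℓ) · 4^ℓ · (1 − 4^{−ℓ})^m < 1. Then there exists an ℓ-independent k-width-family of Fin m. -/
import Mathlib


/-- A collection of bundles of `Fin m`, indexed by `ι`, is `ℓ`-sparse if the union of any
`ℓ - 1` (not necessarily distinct) members is not all of `Fin m`. -/
def Sparse (m ℓ : ℕ) {ι : Type*} (S : ι → Finset (Fin m)) : Prop :=
  ∀ g : Fin (ℓ - 1) → ι,
    (Finset.univ.sup fun t => S (g t)) ≠ (Finset.univ : Finset (Fin m))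

/-- A `k`-width-family of `Fin m`. -/
structure WidthFamily (m k : ℕ) where
  G : Fin k → Finset (Fin m)
  H : Fin 2 → Fin k → Fin k → Finset (Fin m)
  H0_sub : ∀ i j, H 0 i j ⊆ (G i)ᶜ
  H1_sub : ∀ i j, H 1 i j ⊆ G i

/-- The collection `F[b, C]` of `k²` bundles. -/
def WidthFamily.coll {m k : ℕ} (F : WidthFamily m k)
    (b : Fin k → Fin 2) (C : Fin k → Fin k → Fin 2) :
    Fin k × Fin k → Finset (Fin m) := fun p =>
  if b p.1 = 0 then
    if C p.1 p.2 = 0 then F.G p.1 ∪ F.H 0 p.1 p.2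
    else F.G p.1 ∪ ((F.G p.1)ᶜ \ F.H 0 p.1 p.2)
  else
    if C p.1 p.2 = 0 then (F.G p.1)ᶜ ∪ F.H 1 p.1 p.2
    else (F.G p.1)ᶜ ∪ (F.G p.1 \ F.H 1 p.1 p.2)

/-- `F` is `ℓ`-independent if `F[b, C]` is `ℓ`-sparse for every `b` and `C`. -/
def WidthFamily.Independent {m k : ℕ} (F : WidthFamily m k) (ℓ : ℕ) : Prop :=
  ∀ (b : Fin k → Fin 2) (C : Fin k → Fin k → Fin 2), Sparse m ℓ (F.coll b C)

open Finset

section Aux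
open scoped Classical

variable {m k : ℕ}

abbrev Sig (k : ℕ) := Fin k ⊕ (Fin 2 × Fin k × Fin k)
abbrev Amb (k : ℕ) := Sig k → Bool

def miss (a : Amb k) (p : Fin k × Fin k) (w : Fin 2 × Fin 2) : Prop :=
  a (Sum.inl p.1) = decide (w.1 = 1) ∧ a (Sum.inr (w.1, p.1, p.2)) = decide (w.2 = 1)

def fam (m k : ℕ) (ω : Fin m → Amb k) : WidthFamily m k where
  G i := univ.filter fun x => ω x (Sum.inl i) = true
  H t i j := univ.filter fun x => ω x (Sum.inl i) = decide (t = 1) ∧ ω x (Sum.inr (t, i, j)) = true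
  H0_sub := by
    intro i j x hx
    simp only [Finset.mem_filter, Finset.mem_univ, true_and, Finset.mem_compl] at hx ⊢
    simp_all
  H1_sub := by
    intro i j x hx
    simp only [Finset.mem_filter, Finset.mem_univ, true_and] at hx ⊢
    simp_all

lemma mem_coll_iff (ω : Fin m → Amb k) (b : Fin k → Fin 2) (C : Fin k → Fin k → Fin 2)
    (p : Fin k × Fin k) (x : Fin m) :
    x ∈ (fam m k ω).coll b C p ↔ ¬ miss (ω x) p (b p.1, C p.1 p.2) := by
  have h2 : ∀ t : Fin 2, t = 0 ∨ t = 1 := by decide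
  obtain ⟨i, j⟩ := p
  rcases h2 (b i) with hb | hb <;> rcases h2 (C i j) with hc | hc <;>
    (simp only [WidthFamily.coll, fam, miss, hb, hc, if_true, if_false, Finset.mem_union,
      Finset.mem_sdiff, Finset.mem_compl, Finset.mem_filter, Finset.mem_univ, true_and]) <;>
    cases hg : ω x (Sum.inl i) <;> cases hh : ω x (Sum.inr (b i, i, j)) <;>
    simp_all

def Cons (T : Finset (Fin k × Fin k)) (v : ∀ p ∈ T, Fin 2 × Fin 2) : Prop :=
  ∀ p (hp : p ∈ T) q (hq : q ∈ T), p.1 = q.1 → (v p hp).1 = (v q hq).1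

noncomputable def uSet (T : Finset (Fin k × Fin k)) (v : ∀ p ∈ T, Fin 2 × Fin 2) :
    Sig k → Finset Bool
  | Sum.inl i => univ.filter fun β => ∀ p (hp : p ∈ T), p.1 = i → β = decide ((v p hp).1 = 1)
  | Sum.inr (t, i, j) =>
      univ.filter fun γ => ∀ hp : (i, j) ∈ T, (v (i, j) hp).1 = t → γ = decide ((v (i, j) hp).2 = 1)

noncomputable def missFin (T : Finset (Fin k × Fin k)) (v : ∀ p ∈ T, Fin 2 × Fin 2) :
    Finset (Amb k) :=
  univ.filter fun a => ∀ p (hp : p ∈ T), miss a p (v p hp)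

noncomputable def covFin (T : Finset (Fin k × Fin k)) (v : ∀ p ∈ T, Fin 2 × Fin 2) :
    Finset (Amb k) :=
  univ.filter fun a => ∃ p, ∃ hp : p ∈ T, ¬ miss a p (v p hp)

lemma missFin_eq_piFinset (T : Finset (Fin k × Fin k)) (v : ∀ p ∈ T, Fin 2 × Fin 2) :
    missFin T v = Fintype.piFinset (uSet T v) := by
  ext a
  simp only [missFin, Finset.mem_filter, Finset.mem_univ, true_and, Fintype.mem_piFinset]
  constructor
  · intro h s
    match s with
    | Sum.inl i =>
      simp only [uSet, Finset.mem_filter, Finset.mem_univ, true_and]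
      intro p hp hpi
      have := (h p hp).1
      rw [hpi] at this
      exact this
    | Sum.inr (t, i, j) =>
      simp only [uSet, Finset.mem_filter, Finset.mem_univ, true_and]
      intro hp hv
      have := (h (i, j) hp).2
      rw [hv] at this
      exact this
  · intro h p hp
    obtain ⟨i, j⟩ := p
    constructor
    · have h2 := (Finset.mem_filter.mp (h (Sum.inl i))).2
      exact h2 (i, j) hp rfl
    · have h2 := (Finset.mem_filter.mp (h (Sum.inr ((v (i, j) hp).1, i, j)))).2
      exact h2 hp rfl

def ConS (T : Finset (Fin k × Fin k)) (v : ∀ p ∈ T, Fin 2 × Fin 2) : Finset (Sig k) :=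
  T.attach.image (fun p => Sum.inl p.1.1) ∪
    T.attach.image (fun p => Sum.inr ((v p.1 p.2).1, p.1.1, p.1.2))

lemma card_ConS_le (T : Finset (Fin k × Fin k)) (v : ∀ p ∈ T, Fin 2 × Fin 2) :
    (ConS T v).card ≤ 2 * T.card := by
  calc (ConS T v).card ≤ (T.attach.image (fun p : {x // x ∈ T} => Sum.inl (α := Fin k) (β := Fin 2 × Fin k × Fin k) p.1.1)).card
      + (T.attach.image (fun p : {x // x ∈ T} => Sum.inr (α := Fin k) ((v p.1 p.2).1, p.1.1, p.1.2))).card :=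
        Finset.card_union_le _ _
    _ ≤ T.attach.card + T.attach.card := by
        gcongr <;> exact Finset.card_image_le
    _ = 2 * T.card := by rw [Finset.card_attach]; ring

lemma one_le_card_uSet (T : Finset (Fin k × Fin k)) (v : ∀ p ∈ T, Fin 2 × Fin 2)
    (hc : Cons T v) (s : Sig k) : 1 ≤ (uSet T v s).card := by
  refine Finset.card_pos.mpr ?_
  match s with
  | Sum.inl i =>
    by_cases hex : ∃ p : Fin k × Fin k, ∃ hp : p ∈ T, p.1 = i
    · obtain ⟨p₀, hp₀, hpi₀⟩ := hex
      refine ⟨decide ((v p₀ hp₀).1 = 1), ?_⟩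
      simp only [uSet, Finset.mem_filter, Finset.mem_univ, true_and]
      intro p hp hpi
      have := hc p₀ hp₀ p hp (by rw [hpi₀, hpi])
      rw [this]
    · refine ⟨true, ?_⟩
      simp only [uSet, Finset.mem_filter, Finset.mem_univ, true_and]
      intro p hp hpi
      exact absurd ⟨p, hp, hpi⟩ hex
  | Sum.inr (t, i, j) =>
    by_cases hp : (i, j) ∈ T
    · refine ⟨decide ((v (i, j) hp).2 = 1), ?_⟩
      simp only [uSet, Finset.mem_filter, Finset.mem_univ, true_and]
      intro hp' _
      trivial
    · refine ⟨true, ?_⟩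
      simp only [uSet, Finset.mem_filter, Finset.mem_univ, true_and]
      intro hp' _
      exact absurd hp' hp

lemma card_uSet_of_notMem_ConS (T : Finset (Fin k × Fin k)) (v : ∀ p ∈ T, Fin 2 × Fin 2)
    (s : Sig k) (hs : s ∉ ConS T v) : (uSet T v s).card = 2 := by
  have : uSet T v s = Finset.univ := by
    match s with
    | Sum.inl i =>
      apply Finset.eq_univ_of_forall
      intro β
      simp only [uSet, Finset.mem_filter, Finset.mem_univ, true_and]
      intro p hp hpi
      exfalso
      apply hs
      simp only [ConS, Finset.mem_union, Finset.mem_image]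
      exact Or.inl ⟨⟨p, hp⟩, Finset.mem_attach _ _, by rw [hpi]⟩
    | Sum.inr (t, i, j) =>
      apply Finset.eq_univ_of_forall
      intro γ
      simp only [uSet, Finset.mem_filter, Finset.mem_univ, true_and]
      intro hp hv
      exfalso
      apply hs
      simp only [ConS, Finset.mem_union, Finset.mem_image]
      exact Or.inr ⟨⟨(i, j), hp⟩, Finset.mem_attach _ _, by rw [hv]⟩
  rw [this]
  simp

lemma card_missFin_ge (T : Finset (Fin k × Fin k)) (v : ∀ p ∈ T, Fin 2 × Fin 2)
    (hc : Cons T v) : 2 ^ (k + 2 * (k * k) - 2 * T.card) ≤ (missFin T v).card := by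
  rw [missFin_eq_piFinset, Fintype.card_piFinset]
  have h1 : ∀ s : Sig k, (if s ∈ ConS T v then 1 else 2) ≤ (uSet T v s).card := by
    intro s
    by_cases hs : s ∈ ConS T v
    · simp only [hs, if_true]; exact one_le_card_uSet T v hc s
    · simp only [hs, if_false]; exact (card_uSet_of_notMem_ConS T v s hs).ge
  calc 2 ^ (k + 2 * (k * k) - 2 * T.card)
      ≤ ∏ s : Sig k, (if s ∈ ConS T v then 1 else 2) := by
        rw [Finset.prod_ite (fun _ => (1:ℕ)) (fun _ => (2:ℕ)), Finset.prod_const_one,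
          Finset.prod_const, one_mul]
        apply pow_le_pow_right₀ one_le_two
        have h3 : (Finset.univ.filter fun s : Sig k => ¬ s ∈ ConS T v).card
            = Fintype.card (Sig k) - (ConS T v).card := by
          rw [Finset.filter_not, Finset.card_sdiff_of_subset (Finset.subset_univ _), Finset.card_univ,
            Finset.filter_univ_mem]
        rw [h3]
        have h4 : Fintype.card (Sig k) = k + 2 * (k * k) := by
          simp [Fintype.card_sum, Fintype.card_prod, mul_assoc]
        have := card_ConS_le T v
        omega
    _ ≤ ∏ s : Sig k, (uSet T v s).card := Finset.prod_le_prod' fun s _ => h1 s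

lemma card_Amb : Fintype.card (Amb k) = 2 ^ (k + 2 * (k * k)) := by
  rw [Fintype.card_fun]
  simp [Fintype.card_sum, Fintype.card_prod, mul_assoc]

lemma card_covFin_le (T : Finset (Fin k × Fin k)) (v : ∀ p ∈ T, Fin 2 × Fin 2)
    (hc : Cons T v) :
    (covFin T v).card ≤ 2 ^ (k + 2 * (k * k)) - 2 ^ (k + 2 * (k * k) - 2 * T.card) := by
  have hcompl : covFin T v = Finset.univ \ missFin T v := by
    rw [missFin, ← Finset.filter_not]
    apply Finset.filter_congr
    intro a _
    constructor
    · rintro ⟨p, hp, hmiss⟩ hall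
      exact hmiss (hall p hp)
    · intro hall
      by_contra hcon
      push_neg at hcon
      exact hall fun p hp => hcon p hp
  rw [hcompl, Finset.card_sdiff_of_subset (Finset.subset_univ _), Finset.card_univ]
  rw [card_Amb]
  have := card_missFin_ge T v hc
  omega

noncomputable def ev (m : ℕ) (T : Finset (Fin k × Fin k)) (v : ∀ p ∈ T, Fin 2 × Fin 2) :
    Finset (Fin m → Amb k) :=
  univ.filter fun ω => ∀ x, ω x ∈ covFin T v

lemma card_ev (T : Finset (Fin k × Fin k)) (v : ∀ p ∈ T, Fin 2 × Fin 2) :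
    (ev m T v).card = (covFin T v).card ^ m := by
  have : ev m T v = Fintype.piFinset (fun _ : Fin m => covFin T v) := by
    ext ω
    simp [ev, Fintype.mem_piFinset]
  rw [this, Fintype.card_piFinset]
  simp

noncomputable def Jset (k ℓ : ℕ) :
    Finset (Σ T : Finset (Fin k × Fin k), ∀ p ∈ T, Fin 2 × Fin 2) :=
  (Finset.powersetCard ℓ (Finset.univ : Finset (Fin k × Fin k))).sigma
    (fun T => (T.pi fun _ => (Finset.univ : Finset (Fin 2 × Fin 2))).filter (fun v => Cons T v))

lemma card_Jset_le (k ℓ : ℕ) : (Jset k ℓ).card ≤ Nat.choose (k * k) ℓ * 4 ^ ℓ := by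
  rw [Jset, Finset.card_sigma]
  calc ∑ T ∈ Finset.powersetCard ℓ (Finset.univ : Finset (Fin k × Fin k)),
        ((T.pi fun _ => (Finset.univ : Finset (Fin 2 × Fin 2))).filter (fun v => Cons T v)).card
      ≤ ∑ T ∈ Finset.powersetCard ℓ (Finset.univ : Finset (Fin k × Fin k)), 4 ^ ℓ := by
        apply Finset.sum_le_sum
        intro T hT
        have hTc : T.card = ℓ := (Finset.mem_powersetCard.mp hT).2
        calc ((T.pi fun _ => (Finset.univ : Finset (Fin 2 × Fin 2))).filter (fun v => Cons T v)).card
            ≤ (T.pi fun _ => (Finset.univ : Finset (Fin 2 × Fin 2))).card :=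
              Finset.card_filter_le _ _
          _ = 4 ^ ℓ := by
              rw [Finset.card_pi, Finset.prod_const, hTc]
              norm_num
    _ = Nat.choose (k * k) ℓ * 4 ^ ℓ := by
        rw [Finset.sum_const, Finset.card_powersetCard, Finset.card_univ, smul_eq_mul]
        congr 2
        simp [Fintype.card_prod]

lemma cover (hℓ : 0 < ℓ) (hℓk : ℓ ≤ k * k) (ω : Fin m → Amb k)
    (hbad : ¬ (fam m k ω).Independent ℓ) :
    ∃ Tv ∈ Jset k ℓ, ω ∈ ev m Tv.1 Tv.2 := by
  rw [WidthFamily.Independent] at hbad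
  push_neg at hbad
  obtain ⟨b, C, hnsp⟩ := hbad
  rw [Sparse] at hnsp
  push_neg at hnsp
  obtain ⟨g, hsup⟩ := hnsp
  have hcard : (Finset.image g Finset.univ).card ≤ ℓ := by
    calc (Finset.image g Finset.univ).card ≤ (Finset.univ : Finset (Fin (ℓ - 1))).card :=
        Finset.card_image_le
      _ = ℓ - 1 := by simp
      _ ≤ ℓ := Nat.sub_le _ _
  obtain ⟨T, hsub, hTc⟩ := Finset.exists_superset_card_eq hcard
    (by simpa [Fintype.card_prod] using hℓk)
  refine ⟨⟨T, fun p _ => (b p.1, C p.1 p.2)⟩, ?_, ?_⟩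
  · rw [Jset, Finset.mem_sigma]
    constructor
    · exact Finset.mem_powersetCard.mpr ⟨Finset.subset_univ _, hTc⟩
    · rw [Finset.mem_filter]
      exact ⟨Finset.mem_pi.mpr fun p hp => Finset.mem_univ _, fun p hp q hq h => by show (b p.1, C p.1 p.2).1 = (b q.1, C q.1 q.2).1; rw [h]⟩
  · rw [ev, Finset.mem_filter]
    refine ⟨Finset.mem_univ _, fun x => ?_⟩
    rw [covFin, Finset.mem_filter]
    refine ⟨Finset.mem_univ _, ?_⟩
    have hx : x ∈ Finset.univ.sup fun t => (fam m k ω).coll b C (g t) := by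
      rw [hsup]; exact Finset.mem_univ x
    obtain ⟨t, _, hxt⟩ := Finset.mem_sup.mp hx
    exact ⟨g t, hsub (Finset.mem_image_of_mem g (Finset.mem_univ t)),
      (mem_coll_iff ω b C (g t) x).mp hxt⟩

theorem aux_main (m k ℓ : ℕ) (hm : 0 < m) (hk : 0 < k) (hℓ : 0 < ℓ) (hℓk : ℓ ≤ k ^ 2)
    (hbound : (Nat.choose (k ^ 2) ℓ : ℝ) * 4 ^ ℓ * (1 - (4 : ℝ) ^ (-(ℓ : ℤ))) ^ m < 1) :
    ∃ F : WidthFamily m k, F.Independent ℓ := by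
  by_contra hno
  have hbad : ∀ ω : Fin m → Amb k, ¬ (fam m k ω).Independent ℓ := fun ω h => hno ⟨_, h⟩
  rw [pow_two] at hbound hℓk
  set M := 2 ^ (k + 2 * (k * k)) with hM
  set B := 2 ^ (k + 2 * (k * k) - 2 * ℓ) with hB
  have h2ℓ : 2 * ℓ ≤ k + 2 * (k * k) := by omega
  have hBM : B * 4 ^ ℓ = M := by
    have h4 : (4 : ℕ) ^ ℓ = 2 ^ (2 * ℓ) := by rw [pow_mul]; norm_num
    rw [hB, hM, h4, ← pow_add]
    congr 1
    omega
  have hBleM : B ≤ M := Nat.pow_le_pow_right (by norm_num) (by omega)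
  have hchain : M ^ m ≤ Nat.choose (k * k) ℓ * 4 ^ ℓ * (M - B) ^ m := by
    have hcov : (Finset.univ : Finset (Fin m → Amb k)) ⊆
        (Jset k ℓ).biUnion (fun Tv => ev m Tv.1 Tv.2) := by
      intro ω _
      obtain ⟨Tv, hTv, hω⟩ := cover hℓ hℓk ω (hbad ω)
      exact Finset.mem_biUnion.mpr ⟨Tv, hTv, hω⟩
    have h1 : (Finset.univ : Finset (Fin m → Amb k)).card = M ^ m := by
      rw [Finset.card_univ, Fintype.card_fun, card_Amb, Fintype.card_fin]
    have h2 : ∀ Tv ∈ Jset k ℓ, (ev m Tv.1 Tv.2).card ≤ (M - B) ^ m := by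
      intro Tv hTv
      rw [Jset, Finset.mem_sigma] at hTv
      obtain ⟨hT, hv⟩ := hTv
      have hTc : Tv.1.card = ℓ := (Finset.mem_powersetCard.mp hT).2
      have hcons : Cons Tv.1 Tv.2 := (Finset.mem_filter.mp hv).2
      rw [card_ev]
      apply Nat.pow_le_pow_left
      have h3 := card_covFin_le Tv.1 Tv.2 hcons
      rw [hTc] at h3
      exact h3
    calc M ^ m = (Finset.univ : Finset (Fin m → Amb k)).card := h1.symm
      _ ≤ ((Jset k ℓ).biUnion fun Tv => ev m Tv.1 Tv.2).card := Finset.card_le_card hcov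
      _ ≤ ∑ Tv ∈ Jset k ℓ, (ev m Tv.1 Tv.2).card := Finset.card_biUnion_le
      _ ≤ ∑ Tv ∈ Jset k ℓ, (M - B) ^ m := Finset.sum_le_sum h2
      _ = (Jset k ℓ).card * (M - B) ^ m := by rw [Finset.sum_const, smul_eq_mul]
      _ ≤ Nat.choose (k * k) ℓ * 4 ^ ℓ * (M - B) ^ m :=
          Nat.mul_le_mul_right _ (card_Jset_le k ℓ)
  have hlt : Nat.choose (k * k) ℓ * 4 ^ ℓ * (M - B) ^ m < M ^ m := by
    have hMpos : (0 : ℝ) < (M : ℝ) := by positivity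
    have hcast : ((M - B : ℕ) : ℝ) = (1 - (4 : ℝ) ^ (-(ℓ : ℤ))) * (M : ℝ) := by
      have h4 : (4 : ℝ) ^ (-(ℓ : ℤ)) = ((4 : ℝ) ^ ℓ)⁻¹ := by
        rw [zpow_neg, zpow_natCast]
      have hBr : (B : ℝ) * 4 ^ ℓ = (M : ℝ) := by exact_mod_cast congrArg (Nat.cast (R := ℝ)) hBM
      have h4pos : (0 : ℝ) < (4 : ℝ) ^ ℓ := by positivity
      rw [Nat.cast_sub hBleM, h4]
      field_simp
      linarith [hBr]
    have hfin : (Nat.choose (k * k) ℓ : ℝ) * 4 ^ ℓ * ((M - B : ℕ) : ℝ) ^ m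
        < ((M : ℕ) : ℝ) ^ m := by
      rw [hcast, mul_pow]
      have hMm : (0 : ℝ) < ((M : ℕ) : ℝ) ^ m := by positivity
      have h5 := mul_lt_mul_of_pos_right hbound hMm
      rw [one_mul] at h5
      calc (Nat.choose (k * k) ℓ : ℝ) * 4 ^ ℓ * ((1 - (4 : ℝ) ^ (-(ℓ : ℤ))) ^ m * ((M : ℕ) : ℝ) ^ m)
          = (Nat.choose (k * k) ℓ : ℝ) * 4 ^ ℓ * (1 - (4 : ℝ) ^ (-(ℓ : ℤ))) ^ m * ((M : ℕ) : ℝ) ^ m := by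
            ring
        _ < ((M : ℕ) : ℝ) ^ m := h5
    exact_mod_cast hfin
  exact absurd (lt_of_le_of_lt hchain hlt) (lt_irrefl _)

end Aux

/-- If `(k² choose ℓ) · 4^ℓ · (1 − 4^{−ℓ})^m < 1` (as real numbers), then there exists an
`ℓ`-independent `k`-width-family of `Fin m`. -/
theorem exists_independent_width_family_of_union_bound
    (m k ℓ : ℕ) (hm : 0 < m) (hk : 0 < k) (hℓ : 0 < ℓ) (hℓk : ℓ ≤ k ^ 2)
    (hbound : (Nat.choose (k ^ 2) ℓ : ℝ) * 4 ^ ℓ * (1 - (4 : ℝ) ^ (-(ℓ : ℤ))) ^ m < 1) :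
    ∃ F : WidthFamily m k, F.Independent ℓ :=
  aux_main m k ℓ hm hk hℓ hℓk hbound
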